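/- arXiv:1812.11575 — 3 statements merged into one kernel-verified Lean document; each statement's English description precedes it below -/
import Mathlib

section
/- Let G be a group acting on a topological space X by homeomorphisms, Y a T1 topological space, and π : X → Y a pseudo-quotient (continuous, surjective, G-invariant, separating disjoint closed invariant sets as in the definition). Then for any x₁, x₂ ∈ X, π(x₁) = π(x₂) if and only if the closures of the orbits G·x₁ and G·x₂ in X intersect. -/
/-- A pseudo-quotient: a continuous, surjective, `G`-invariant map such that disjoint
closed `G`-invariant subsets of `X` have disjoint image-closures in `Y`. -/
def IsPseudoQuotient (G : Type*) [Group G] {X Y : Type*} [TopologicalSpace X]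
    [TopologicalSpace Y] [MulAction G X] (π : X → Y) : Prop :=
  Continuous π ∧ Function.Surjective π ∧ (∀ (g : G) (x : X), π (g • x) = π x) ∧
    ∀ W₁ W₂ : Set X, IsClosed W₁ → IsClosed W₂ →
      (∀ (g : G), ∀ x ∈ W₁, g • x ∈ W₁) → (∀ (g : G), ∀ x ∈ W₂, g • x ∈ W₂) →
      Disjoint W₁ W₂ → Disjoint (closure (π '' W₁)) (closure (π '' W₂))

private lemma orbit_closure_invariant {G X : Type*} [Group G] [TopologicalSpace X]
    [MulAction G X] [ContinuousConstSMul G X] (x : X) (g : G) :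
    ∀ y ∈ closure (MulAction.orbit G x), g • y ∈ closure (MulAction.orbit G x) := by
  intro y hy
  have h := Set.smul_mem_smul_set (a := g) hy
  rw [← closure_smul, MulAction.smul_orbit] at h
  exact h

private lemma pi_const_on_orbit_closure {G X Y : Type*} [Group G] [TopologicalSpace X]
    [TopologicalSpace Y] [MulAction G X] [T1Space Y] (π : X → Y)
    (hc : Continuous π) (hinv : ∀ (g : G) (x : X), π (g • x) = π x) (x : X) :
    ∀ y ∈ closure (MulAction.orbit G x), π y = π x := by
  intro y hy
  have hcl : IsClosed {z : X | π z = π x} := isClosed_singleton.preimage hc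
  have hsub : MulAction.orbit G x ⊆ {z : X | π z = π x} := by
    rintro _ ⟨g, rfl⟩; exact hinv g x
  exact hcl.closure_subset_iff.mpr hsub hy

theorem stmt_15 {G X Y : Type*} [Group G] [TopologicalSpace X] [TopologicalSpace Y]
    [MulAction G X] [ContinuousConstSMul G X] [T1Space Y] (π : X → Y)
    (hπ : IsPseudoQuotient G π) (x₁ x₂ : X) :
    π x₁ = π x₂ ↔
      (closure (MulAction.orbit G x₁) ∩ closure (MulAction.orbit G x₂)).Nonempty := by
  obtain ⟨hc, -, hinv, hsep⟩ := hπ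
  constructor
  · intro heq
    by_contra hne
    rw [Set.not_nonempty_iff_eq_empty, ← Set.disjoint_iff_inter_eq_empty] at hne
    have := hsep _ _ isClosed_closure isClosed_closure
      (orbit_closure_invariant x₁) (orbit_closure_invariant x₂) hne
    have h1 : π x₁ ∈ closure (π '' closure (MulAction.orbit G x₁)) :=
      subset_closure ⟨x₁, subset_closure (MulAction.mem_orbit_self x₁), rfl⟩
    have h2 : π x₂ ∈ closure (π '' closure (MulAction.orbit G x₂)) :=
      subset_closure ⟨x₂, subset_closure (MulAction.mem_orbit_self x₂), rfl⟩
    exact this.ne_of_mem h1 h2 heq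
  · rintro ⟨z, hz1, hz2⟩
    rw [← pi_const_on_orbit_closure π hc hinv x₁ z hz1,
        pi_const_on_orbit_closure π hc hinv x₂ z hz2]
end

section
/- Let G be a group acting on a topological space X by homeomorphisms, Y a T1 space, and π : X → Y a pseudo-quotient. Suppose X = Y₀ ⊔ U where Y₀ ⊆ X is closed and G-invariant and U ⊆ X is open and orbitwise-closed (for every u ∈ U the closure of G·u is contained in U). Then Y = π(Y₀) ⊔ π(U) with π(Y₀) closed and π(U) open in Y, U is saturated (π⁻¹(π(U)) = U), and the restriction π|_U : U → π(U) is again a pseudo-quotient for the G-action on U. -/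
theorem stmt_16 {G X Y : Type*} [Group G] [TopologicalSpace X] [TopologicalSpace Y]
    [MulAction G X] [ContinuousConstSMul G X] [T1Space Y] (π : X → Y)
    (hπ : IsPseudoQuotient G π) (Y₀ U : Set X) (hY₀ : IsClosed Y₀)
    (hY₀inv : ∀ (g : G), ∀ x ∈ Y₀, g • x ∈ Y₀) (hU : IsOpen U)
    (hUorb : ∀ u ∈ U, closure (MulAction.orbit G u) ⊆ U)
    (hdisj : Disjoint Y₀ U) (hcover : Y₀ ∪ U = Set.univ) :
    IsClosed (π '' Y₀) ∧ IsOpen (π '' U) ∧ Disjoint (π '' Y₀) (π '' U) ∧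
      π '' Y₀ ∪ π '' U = Set.univ ∧ π ⁻¹' (π '' U) = U ∧
      (Continuous fun u : U => π ↑u) ∧
      (∀ y ∈ π '' U, ∃ u : U, π ↑u = y) ∧
      (∀ W₁ W₂ : Set X, W₁ ⊆ U → W₂ ⊆ U →
        IsClosed {u : U | (u : X) ∈ W₁} → IsClosed {u : U | (u : X) ∈ W₂} →
        (∀ (g : G), ∀ x ∈ W₁, g • x ∈ W₁) → (∀ (g : G), ∀ x ∈ W₂, g • x ∈ W₂) →
        Disjoint W₁ W₂ →
        Disjoint (closure (π '' W₁) ∩ π '' U) (closure (π '' W₂) ∩ π '' U)) := by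
  obtain ⟨hc, hs, hinv, hsep⟩ := hπ
  -- closures of invariant sets are invariant
  have hclinv : ∀ S : Set X, (∀ g : G, ∀ x ∈ S, g • x ∈ S) →
      ∀ g : G, ∀ x ∈ closure S, g • x ∈ closure S := by
    intro S hS g x hx
    have hmt : Set.MapsTo (fun w : X => g • w) S S := fun w hw => hS g w hw
    exact hmt.closure (continuous_const_smul g) hx
  -- orbits are invariant
  have horbinv : ∀ x : X, ∀ g : G, ∀ z ∈ MulAction.orbit G x, g • z ∈ MulAction.orbit G x := by
    intro x g z hz
    exact MulAction.smul_orbit g x ▸ Set.smul_mem_smul_set hz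
  -- π is constant on orbit closures
  have hπconst : ∀ x : X, ∀ z ∈ closure (MulAction.orbit G x), π z = π x := by
    intro x z hz
    have h1 : π '' MulAction.orbit G x ⊆ {π x} := by
      rintro _ ⟨_, ⟨g, rfl⟩, rfl⟩
      simp [hinv g x]
    have h2 : π z ∈ closure (π '' MulAction.orbit G x) :=
      image_closure_subset_closure_image hc ⟨z, hz, rfl⟩
    exact isClosed_singleton.closure_subset_iff.mpr h1 h2
  -- key separation fact
  have key : ∀ C : Set X, IsClosed C → (∀ g : G, ∀ x ∈ C, g • x ∈ C) →
      ∀ u : X, Disjoint C (closure (MulAction.orbit G u)) →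
      π u ∉ closure (π '' C) := by
    intro C hC hCinv u hdis hmem
    have hK : IsClosed (closure (MulAction.orbit G u)) := isClosed_closure
    have hd := hsep C (closure (MulAction.orbit G u)) hC hK hCinv
      (hclinv _ (horbinv u)) hdis
    have hu : π u ∈ closure (π '' closure (MulAction.orbit G u)) :=
      subset_closure ⟨u, subset_closure (MulAction.mem_orbit_self u), rfl⟩
    exact hd.ne_of_mem hmem hu rfl
  -- π(Y₀) ∩ π(U) = ∅
  have hdisjimg : Disjoint (π '' Y₀) (π '' U) := by
    rw [Set.disjoint_left]
    rintro y hy ⟨u, huU, rfl⟩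
    have hd : Disjoint Y₀ (closure (MulAction.orbit G u)) :=
      hdisj.mono_right (hUorb u huU)
    exact key Y₀ hY₀ hY₀inv u hd (subset_closure hy)
  -- π(Y₀) is closed
  have hclosedY₀ : IsClosed (π '' Y₀) := by
    rw [← closure_subset_iff_isClosed]
    intro y hy
    obtain ⟨x, rfl⟩ := hs y
    rcases (hcover ▸ Set.mem_univ x : x ∈ Y₀ ∪ U) with hx | hx
    · exact ⟨x, hx, rfl⟩
    · exact absurd hy (key Y₀ hY₀ hY₀inv x (hdisj.mono_right (hUorb x hx)))
  -- cover
  have hcoverimg : π '' Y₀ ∪ π '' U = Set.univ := by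
    ext y
    simp only [Set.mem_union, Set.mem_univ, iff_true]
    obtain ⟨x, rfl⟩ := hs y
    rcases (hcover ▸ Set.mem_univ x : x ∈ Y₀ ∪ U) with hx | hx
    · exact Or.inl ⟨x, hx, rfl⟩
    · exact Or.inr ⟨x, hx, rfl⟩
  -- π(U) open
  have hUeq : π '' U = (π '' Y₀)ᶜ := by
    apply Set.eq_of_subset_of_subset
    · intro y hy hy'
      exact hdisjimg.ne_of_mem hy' hy rfl
    · intro y hy
      rcases (hcoverimg ▸ Set.mem_univ y : y ∈ π '' Y₀ ∪ π '' U) with h | h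
      · exact absurd h hy
      · exact h
  have hopenU : IsOpen (π '' U) := hUeq ▸ hclosedY₀.isOpen_compl
  refine ⟨hclosedY₀, hopenU, hdisjimg, hcoverimg, ?_, hc.comp continuous_subtype_val, ?_, ?_⟩
  · -- saturation
    apply Set.eq_of_subset_of_subset
    · intro x hx
      rcases (hcover ▸ Set.mem_univ x : x ∈ Y₀ ∪ U) with h | h
      · exact absurd hx (Set.disjoint_left.mp hdisjimg.symm · ⟨x, h, rfl⟩)
      · exact h
    · exact Set.subset_preimage_image π U
  · rintro y ⟨u, hu, rfl⟩
    exact ⟨⟨u, hu⟩, rfl⟩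
  · -- restriction is a pseudo-quotient
    intro W₁ W₂ hW₁U hW₂U hW₁c hW₂c hW₁inv hW₂inv hWdisj
    -- `closure W ∩ U ⊆ W` for W closed in U
    have hrel : ∀ W : Set X, W ⊆ U → IsClosed {u : U | (u : X) ∈ W} →
        ∀ x ∈ closure W, x ∈ U → x ∈ W := by
      intro W hWU hWc x hx hxU
      obtain ⟨C, hC, hpre⟩ := isClosed_induced_iff.mp hWc
      have hWC : W ⊆ C := by
        intro w hw
        have : (⟨w, hWU hw⟩ : U) ∈ Subtype.val ⁻¹' C := by
          rw [hpre]; exact hw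
        exact this
      have hxC : x ∈ C := hC.closure_subset_iff.mpr hWC hx
      have : (⟨x, hxU⟩ : U) ∈ Subtype.val ⁻¹' C := hxC
      rw [hpre] at this
      exact this
    rw [Set.disjoint_left]
    rintro y ⟨hy₁, u, huU, rfl⟩ ⟨hy₂, -⟩
    set K := closure (MulAction.orbit G u) with hKdef
    have hKU : K ⊆ U := hUorb u huU
    have step : ∀ W : Set X, W ⊆ U → IsClosed {u : U | (u : X) ∈ W} →
        (∀ g : G, ∀ x ∈ W, g • x ∈ W) → π u ∈ closure (π '' W) →
        ∃ w ∈ W, π w = π u := by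
      intro W hWU hWc hWinv hmem
      by_contra h
      push_neg at h
      have hd : Disjoint (closure W) K := by
        rw [Set.disjoint_left]
        intro z hz hzK
        have hzW : z ∈ W := hrel W hWU hWc z hz (hKU hzK)
        exact h z hzW (hπconst u z hzK)
      have hmem' : π u ∈ closure (π '' closure W) :=
        closure_mono (Set.image_mono subset_closure) hmem
      exact key (closure W) isClosed_closure (hclinv W hWinv) u hd hmem'
    obtain ⟨w₁, hw₁, hpw₁⟩ := step W₁ hW₁U hW₁c hW₁inv hy₁
    obtain ⟨w₂, hw₂, hpw₂⟩ := step W₂ hW₂U hW₂c hW₂inv hy₂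
    -- now derive a contradiction from π w₁ = π w₂
    have hK₂U : closure (MulAction.orbit G w₂) ⊆ U := hUorb w₂ (hW₂U hw₂)
    have hK₂W₂ : closure (MulAction.orbit G w₂) ⊆ W₂ := by
      intro z hz
      have hz' : z ∈ closure W₂ := closure_mono (by
        rintro _ ⟨g, rfl⟩; exact hW₂inv g w₂ hw₂) hz
      exact hrel W₂ hW₂U hW₂c z hz' (hK₂U hz)
    have hd : Disjoint (closure W₁) (closure (MulAction.orbit G w₂)) := by
      rw [Set.disjoint_left]
      intro z hz hz'
      have hzW₁ : z ∈ W₁ := hrel W₁ hW₁U hW₁c z hz (hK₂U hz')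
      exact Set.disjoint_left.mp hWdisj hzW₁ (hK₂W₂ hz')
    have hd' := hsep (closure W₁) (closure (MulAction.orbit G w₂)) isClosed_closure
      isClosed_closure (hclinv W₁ hW₁inv) (hclinv _ (horbinv w₂)) hd
    have hm₁ : π u ∈ closure (π '' closure W₁) :=
      subset_closure ⟨w₁, subset_closure hw₁, hpw₁⟩
    have hm₂ : π u ∈ closure (π '' closure (MulAction.orbit G w₂)) :=
      subset_closure ⟨w₂, subset_closure (MulAction.mem_orbit_self w₂), hpw₂⟩
    exact hd'.ne_of_mem hm₁ hm₂ rfl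
end

section
/- Let R be a commutative ring and M, N two R-modules. Suppose there are R-linear maps μ : M ⊗_R N → R and ε : R → N ⊗_R M such that the composite M ≅ M ⊗_R R → M ⊗_R (N ⊗_R M) ≅ (M ⊗_R N) ⊗_R M → R ⊗_R M ≅ M, given by (id_M ⊗ ε) followed by (μ ⊗ id_M), is the identity on M. Then M is a finitely generated R-module. (Zorro's lemma / finite generation forced by duality data.) -/
open TensorProduct in
theorem stmt_17 {R M N : Type*} [CommRing R] [AddCommGroup M] [Module R M]
    [AddCommGroup N] [Module R N]
    (μ : M ⊗[R] N →ₗ[R] R) (ε : R →ₗ[R] N ⊗[R] M)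
    (h : (TensorProduct.lid R M).toLinearMap ∘ₗ LinearMap.rTensor M μ ∘ₗ
        (TensorProduct.assoc R M N M).symm.toLinearMap ∘ₗ LinearMap.lTensor M ε ∘ₗ
        (TensorProduct.rid R M).symm.toLinearMap = LinearMap.id) :
    Module.Finite R M := by
  classical
  obtain ⟨s, hs⟩ := TensorProduct.exists_finset (ε 1)
  refine ⟨⟨s.image Prod.snd, ?_⟩⟩
  rw [eq_top_iff]
  intro x _
  have hx := congrArg (fun f => f x) h
  simp only [LinearMap.comp_apply, LinearMap.id_apply] at hx
  simp only [LinearEquiv.coe_coe] at hx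
  rw [TensorProduct.rid_symm_apply] at hx
  rw [LinearMap.lTensor_tmul, hs, TensorProduct.tmul_sum, map_sum, map_sum, map_sum] at hx
  simp only [TensorProduct.assoc_symm_tmul, LinearMap.rTensor_tmul,
    TensorProduct.lid_tmul] at hx
  rw [← hx]
  exact Submodule.sum_mem _ fun p hp => Submodule.smul_mem _ _
    (Submodule.subset_span (Finset.mem_image_of_mem Prod.snd hp))
end
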